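/- Let M ∈ ℝ^{n×n} be symmetric positive definite, let U ∈ ℝ^{n×r}, let Λ ∈ ℝ^{r×r} be symmetric, and set Ξ = U^T M^{-1} U. Then all eigenvalues of the r × r matrix I + Ξ Λ are real, and M + U Λ U^T is symmetric positive definite if and only if all eigenvalues of I + Ξ Λ are positive. -/

import Mathlib

open Matrix

lemma real_map_isHermitian {k : ℕ} {B : Matrix (Fin k) (Fin k) ℝ} (hB : B.IsHermitian) :
    (B.map (algebraMap ℝ ℂ)).IsHermitian := by
  have h := Matrix.conjTranspose_map (A := B) (algebraMap ℝ ℂ)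
    (fun x => by simp [Complex.conj_ofReal])
  unfold Matrix.IsHermitian at *
  rw [← h, hB]

lemma mem_spectrum_map_iff {k : ℕ} (B : Matrix (Fin k) (Fin k) ℝ) (μ : ℝ) :
    (μ : ℂ) ∈ spectrum ℂ (B.map (algebraMap ℝ ℂ)) ↔ μ ∈ spectrum ℝ B := by
  rw [spectrum.mem_iff, spectrum.mem_iff, not_iff_not]
  have h1 : algebraMap ℂ (Matrix (Fin k) (Fin k) ℂ) (μ : ℂ) - B.map (algebraMap ℝ ℂ)
      = (algebraMap ℝ (Matrix (Fin k) (Fin k) ℝ) μ - B).map (algebraMap ℝ ℂ) := by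
    ext i j
    simp [Matrix.algebraMap_matrix_apply, Matrix.map_apply, apply_ite]
  rw [h1, Matrix.isUnit_iff_isUnit_det, Matrix.isUnit_iff_isUnit_det, ← RingHom.mapMatrix_apply, ← RingHom.map_det]
  simp [isUnit_iff_ne_zero]

lemma spec_complex_herm {k : ℕ} {B : Matrix (Fin k) (Fin k) ℂ} (hB : B.IsHermitian) :
    spectrum ℂ B = Set.range (fun i => (hB.eigenvalues i : ℂ)) := by
  rw [hB.spectrum_eq_image_range, ← Set.range_comp]
  rfl

lemma posdef_conj {k : ℕ} {B C : Matrix (Fin k) (Fin k) ℝ} (hB : B.PosDef) (hC : IsUnit C) :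
    (Cᵀ * B * C).PosDef := by
  refine Matrix.PosDef.of_dotProduct_mulVec_pos ?_ ?_
  · have hBt : Bᵀ = B := by
      rw [← Matrix.conjTranspose_eq_transpose_of_trivial, hB.1]
    show (Cᵀ * B * C)ᴴ = _
    rw [Matrix.conjTranspose_eq_transpose_of_trivial, Matrix.transpose_mul,
      Matrix.transpose_mul, Matrix.transpose_transpose, hBt, mul_assoc]
  · intro x hx
    have hinj := Matrix.mulVec_injective_iff_isUnit.mpr hC
    have hx' : C *ᵥ x ≠ 0 := fun h => hx (hinj (by simpa using h))
    have hpos := hB.dotProduct_mulVec_pos hx'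
    have : star x ⬝ᵥ (Cᵀ * B * C) *ᵥ x = star (C *ᵥ x) ⬝ᵥ B *ᵥ (C *ᵥ x) := by
      simp only [star_trivial, ← Matrix.mulVec_mulVec]
      rw [Matrix.dotProduct_mulVec, Matrix.vecMul_transpose]
    rwa [this]

lemma posdef_of_eigenvalues_pos {k : ℕ} {B : Matrix (Fin k) (Fin k) ℝ} (hB : B.IsHermitian)
    (h : ∀ i, 0 < hB.eigenvalues i) : B.PosDef := by
  have hVu : IsUnit ((hB.eigenvectorUnitary : Matrix (Fin k) (Fin k) ℝ)) :=
    ⟨⟨_, star ((hB.eigenvectorUnitary : Matrix (Fin k) (Fin k) ℝ)),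
      (Matrix.mem_unitaryGroup_iff).mp (hB.eigenvectorUnitary).2,
      (Matrix.mem_unitaryGroup_iff').mp (hB.eigenvectorUnitary).2⟩, rfl⟩
  have hVt : IsUnit ((hB.eigenvectorUnitary : Matrix (Fin k) (Fin k) ℝ))ᵀ := by
    rw [Matrix.isUnit_iff_isUnit_det, Matrix.det_transpose,
      ← Matrix.isUnit_iff_isUnit_det]
    exact hVu
  have hD : (Matrix.diagonal (RCLike.ofReal ∘ hB.eigenvalues) :
      Matrix (Fin k) (Fin k) ℝ).PosDef := by
    rw [Matrix.posDef_diagonal_iff]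
    intro i
    simpa using h i
  have key := posdef_conj hD hVt
  rw [Matrix.transpose_transpose] at key
  have : B = (hB.eigenvectorUnitary : Matrix (Fin k) (Fin k) ℝ) *
      Matrix.diagonal (RCLike.ofReal ∘ hB.eigenvalues) *
      ((hB.eigenvectorUnitary : Matrix (Fin k) (Fin k) ℝ))ᵀ := by
    conv_lhs => rw [hB.spectral_theorem, Unitary.conjStarAlgAut_apply]
    rw [Matrix.star_eq_conjTranspose, Matrix.conjTranspose_eq_transpose_of_trivial]
  rwa [← this] at key

lemma real_symm_spec {k : ℕ} {B : Matrix (Fin k) (Fin k) ℝ} (hB : B.IsHermitian) :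
    (∀ μ ∈ spectrum ℂ (B.map (algebraMap ℝ ℂ)), μ.im = 0) ∧
    (B.PosDef ↔ ∀ μ ∈ spectrum ℂ (B.map (algebraMap ℝ ℂ)), 0 < μ.re) := by
  have hBc := real_map_isHermitian hB
  have hs := spec_complex_herm hBc
  have hmem : ∀ μ ∈ spectrum ℂ (B.map (algebraMap ℝ ℂ)), ∃ x : ℝ,
      x ∈ spectrum ℝ B ∧ μ = (x : ℂ) := by
    intro μ hμ
    rw [hs] at hμ
    obtain ⟨i, rfl⟩ := hμ
    exact ⟨hBc.eigenvalues i, (mem_spectrum_map_iff B _).mp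
      (hs ▸ Set.mem_range_self i), rfl⟩
  refine ⟨fun μ hμ => ?_, ?_⟩
  · obtain ⟨x, _, rfl⟩ := hmem μ hμ
    simp
  · constructor
    · intro hpd μ hμ
      obtain ⟨x, hx, rfl⟩ := hmem μ hμ
      rw [hB.spectrum_real_eq_range_eigenvalues] at hx
      obtain ⟨i, rfl⟩ := hx
      simpa using hpd.eigenvalues_pos i
    · intro h
      refine posdef_of_eigenvalues_pos hB fun i => ?_
      have h1 : ((hB.eigenvalues i : ℂ)) ∈ spectrum ℂ (B.map (algebraMap ℝ ℂ)) :=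
        (mem_spectrum_map_iff B _).mpr (hB.eigenvalues_mem_spectrum_real i)
      simpa using h _ h1

lemma mem_spec_one_add_det {p q : ℕ} (X : Matrix (Fin p) (Fin q) ℂ)
    (Y : Matrix (Fin q) (Fin p) ℂ) {μ : ℂ} (hμ : μ ≠ 1) :
    μ ∈ spectrum ℂ (1 + X * Y) ↔ (1 - (μ - 1)⁻¹ • (X * Y)).det = 0 := by
  have hc0 : μ - 1 ≠ 0 := sub_ne_zero.mpr hμ
  rw [spectrum.mem_iff, Matrix.isUnit_iff_isUnit_det, isUnit_iff_ne_zero, not_not]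
  have h1 : algebraMap ℂ (Matrix (Fin p) (Fin p) ℂ) μ - (1 + X * Y)
      = (μ - 1) • (1 - (μ - 1)⁻¹ • (X * Y)) := by
    rw [Algebra.algebraMap_eq_smul_one, smul_sub, smul_smul, mul_inv_cancel₀ hc0, one_smul,
      sub_smul, one_smul]
    abel
  rw [h1, Matrix.det_smul]
  simp [pow_eq_zero_iff, hc0]

lemma spec_one_add_mul_swap {p q : ℕ} (X : Matrix (Fin p) (Fin q) ℂ)
    (Y : Matrix (Fin q) (Fin p) ℂ) {μ : ℂ} (hμ : μ ≠ 1) :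
    μ ∈ spectrum ℂ (1 + X * Y) ↔ μ ∈ spectrum ℂ (1 + Y * X) := by
  rw [mem_spec_one_add_det X Y hμ, mem_spec_one_add_det Y X hμ]
  have h : (1 - (μ - 1)⁻¹ • (X * Y)).det = (1 - (μ - 1)⁻¹ • (Y * X)).det := by
    have e1 : (1 : Matrix (Fin p) (Fin p) ℂ) - (μ - 1)⁻¹ • (X * Y)
        = 1 + (-(μ - 1)⁻¹ • X) * Y := by
      rw [Matrix.smul_mul, neg_smul, sub_eq_add_neg]
    have e2 : (1 : Matrix (Fin q) (Fin q) ℂ) - (μ - 1)⁻¹ • (Y * X)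
        = 1 + Y * (-(μ - 1)⁻¹ • X) := by
      rw [Matrix.mul_smul, neg_smul, sub_eq_add_neg]
    rw [e1, e2, Matrix.det_one_add_mul_comm]
  rw [h]

/-- for a symmetric positive definite `M ∈ ℝ^{n×n}`, `U ∈ ℝ^{n×r}`,
symmetric `Λ ∈ ℝ^{r×r}`, and `Ξ = Uᵀ M⁻¹ U`, all eigenvalues of the `r × r` matrix
`I + Ξ Λ` are real, and `M + U Λ Uᵀ` is symmetric positive definite if and only if all
eigenvalues of `I + Ξ Λ` are positive.  (Eigenvalues are taken as the spectrum of the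
complexification of `I + Ξ Λ`.) -/
theorem posdef_update_eigenvalue_criterion {n r : ℕ}
    (M : Matrix (Fin n) (Fin n) ℝ) (hM : M.PosDef)
    (U : Matrix (Fin n) (Fin r) ℝ)
    (Λ : Matrix (Fin r) (Fin r) ℝ) (hΛ : Λᵀ = Λ)
    (Ξ : Matrix (Fin r) (Fin r) ℝ) (hΞ : Ξ = Uᵀ * M⁻¹ * U) :
    (∀ μ ∈ spectrum ℂ ((1 + Ξ * Λ).map (algebraMap ℝ ℂ)), μ.im = 0) ∧
    ((M + U * Λ * Uᵀ).PosDef ↔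
      ∀ μ ∈ spectrum ℂ ((1 + Ξ * Λ).map (algebraMap ℝ ℂ)), 0 < μ.re) := by
  have hMi : M⁻¹.PosDef := hM.inv
  set R : Matrix (Fin n) (Fin n) ℝ := (open scoped MatrixOrder in CFC.sqrt M⁻¹) with hRdef
  have hRR : R * R = M⁻¹ := by
    open scoped MatrixOrder in exact CFC.sqrt_mul_sqrt_self _ hMi.posSemidef.nonneg
  have hRH : R.IsHermitian := by
    open scoped MatrixOrder in exact (CFC.sqrt_nonneg _).posSemidef.1
  have hRT : Rᵀ = R := by rw [← Matrix.conjTranspose_eq_transpose_of_trivial, hRH]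
  have hRu : IsUnit R := by
    have h1 : IsUnit (R * R) := by rw [hRR]; exact hMi.isUnit
    rw [Matrix.isUnit_iff_isUnit_det] at h1 ⊢
    rw [Matrix.det_mul] at h1
    exact isUnit_of_mul_isUnit_left h1
  have hRdet : IsUnit R.det := (Matrix.isUnit_iff_isUnit_det R).mp hRu
  set S : Matrix (Fin n) (Fin r) ℝ := R * U with hSdef
  set A : Matrix (Fin n) (Fin n) ℝ := S * Λ * Sᵀ with hAdef
  have hST : Sᵀ = Uᵀ * R := by rw [hSdef, Matrix.transpose_mul, hRT]
  have hΛH : Λ.IsHermitian := by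
    show Λᴴ = Λ
    rw [Matrix.conjTranspose_eq_transpose_of_trivial, hΛ]
  have hAH : A.IsHermitian := by
    have h := Matrix.isHermitian_mul_mul_conjTranspose S hΛH
    rwa [Matrix.conjTranspose_eq_transpose_of_trivial, ← hAdef] at h
  have hBH : (1 + A).IsHermitian := Matrix.isHermitian_one.add hAH
  have hXiL : Ξ * Λ = Sᵀ * (S * Λ) := by
    rw [hΞ, ← hRR, hST, hSdef]
    simp only [Matrix.mul_assoc]
  have hcong : M + U * Λ * Uᵀ = R⁻¹ * (1 + A) * R⁻¹ := by
    have hMM : R⁻¹ * R⁻¹ = M := by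
      rw [← Matrix.mul_inv_rev, hRR,
        Matrix.nonsing_inv_nonsing_inv _ ((Matrix.isUnit_iff_isUnit_det M).mp hM.isUnit)]
    have h2 : R⁻¹ * A * R⁻¹ = U * Λ * Uᵀ := by
      rw [hAdef, hST, hSdef]
      calc R⁻¹ * (R * U * Λ * (Uᵀ * R)) * R⁻¹
          = (R⁻¹ * R) * (U * (Λ * (Uᵀ * (R * R⁻¹)))) := by simp only [Matrix.mul_assoc]
        _ = U * Λ * Uᵀ := by
            rw [Matrix.nonsing_inv_mul _ hRdet, Matrix.mul_nonsing_inv _ hRdet,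
              Matrix.one_mul, Matrix.mul_one, Matrix.mul_assoc]
    rw [mul_add, add_mul, mul_one, hMM, h2]
  have hRiT : (R⁻¹)ᵀ = R⁻¹ := by rw [Matrix.transpose_nonsing_inv, hRT]
  have hRiu : IsUnit R⁻¹ := Matrix.isUnit_nonsing_inv_iff.mpr hRu
  have hiff : (M + U * Λ * Uᵀ).PosDef ↔ (1 + A).PosDef := by
    constructor
    · intro h
      have key := posdef_conj h hRu
      have heq : Rᵀ * (M + U * Λ * Uᵀ) * R = 1 + A := by
        rw [hRT, hcong]
        calc R * (R⁻¹ * (1 + A) * R⁻¹) * R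
            = (R * R⁻¹) * ((1 + A) * (R⁻¹ * R)) := by simp only [Matrix.mul_assoc]
          _ = 1 + A := by
              rw [Matrix.mul_nonsing_inv _ hRdet, Matrix.nonsing_inv_mul _ hRdet, one_mul,
                mul_one]
      rwa [heq] at key
    · intro h
      have key := posdef_conj h hRiu
      rwa [hRiT, ← hcong] at key
  have hmapB : (1 + Ξ * Λ).map (algebraMap ℝ ℂ) =
      1 + (Sᵀ.map (algebraMap ℝ ℂ)) * ((S * Λ).map (algebraMap ℝ ℂ)) := by
    rw [hXiL, Matrix.map_add _ (map_add _), Matrix.map_one _ (map_zero _) (map_one _),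
      Matrix.map_mul]
  have hmapA : (1 + A).map (algebraMap ℝ ℂ) =
      1 + ((S * Λ).map (algebraMap ℝ ℂ)) * (Sᵀ.map (algebraMap ℝ ℂ)) := by
    rw [hAdef, Matrix.map_add _ (map_add _),
      Matrix.map_one _ (map_zero _) (map_one _), Matrix.map_mul]
  have hswap : ∀ μ : ℂ, μ ≠ 1 →
      (μ ∈ spectrum ℂ ((1 + Ξ * Λ).map (algebraMap ℝ ℂ)) ↔
        μ ∈ spectrum ℂ ((1 + A).map (algebraMap ℝ ℂ))) := by
    intro μ hμ
    rw [hmapB, hmapA]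
    exact spec_one_add_mul_swap _ _ hμ
  obtain ⟨hre, hpd⟩ := real_symm_spec hBH
  refine ⟨fun μ hμ => ?_, ?_⟩
  · by_cases h1 : μ = 1
    · subst h1; simp
    · exact hre μ ((hswap μ h1).mp hμ)
  · rw [hiff, hpd]
    constructor
    · intro h μ hμ
      by_cases h1 : μ = 1
      · subst h1; norm_num
      · exact h μ ((hswap μ h1).mp hμ)
    · intro h μ hμ
      by_cases h1 : μ = 1
      · subst h1; norm_num
      · exact h μ ((hswap μ h1).mpr hμ)
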